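/- Let A be Metzler and J nonnegative, both n×n. If there exists λ ∈ ℝ^n strictly positive with λᵀA < 0 and λᵀ(J − I) < 0 (componentwise), then for every T > 0 the matrix J·exp(A·T) has spectral radius strictly less than 1. -/

import Mathlib

open Matrix NormedSpace Nat

namespace ArbDwellAux

variable {n : ℕ}

lemma mul_nonneg_entries {M N : Matrix (Fin n) (Fin n) ℝ}
    (hM : ∀ i j, 0 ≤ M i j) (hN : ∀ i j, 0 ≤ N i j) (i j : Fin n) : 0 ≤ (M * N) i j := by
  rw [Matrix.mul_apply]
  exact Finset.sum_nonneg fun k _ => mul_nonneg (hM i k) (hN k j)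

lemma pow_nonneg_entries {M : Matrix (Fin n) (Fin n) ℝ}
    (hM : ∀ i j, 0 ≤ M i j) (k : ℕ) (i j : Fin n) : 0 ≤ (M ^ k) i j := by
  induction k generalizing i j with
  | zero =>
      rw [pow_zero]
      by_cases h : i = j <;> simp [Matrix.one_apply, h]
  | succ k ih =>
      rw [pow_succ]
      exact mul_nonneg_entries ih hM i j

lemma exp_entry (M : Matrix (Fin n) (Fin n) ℝ) (i j : Fin n) :
    exp M i j = ∑' (k : ℕ), ((k ! : ℝ)⁻¹ * (M ^ k) i j) := by
  letI : NormedRing (Matrix (Fin n) (Fin n) ℝ) := Matrix.linftyOpNormedRing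
  letI : NormedAlgebra ℝ (Matrix (Fin n) (Fin n) ℝ) := Matrix.linftyOpNormedAlgebra
  have h : Summable fun k : ℕ => ((k ! : ℝ)⁻¹) • M ^ k := expSeries_summable' (𝕂 := ℝ) M
  have h1 : Summable fun k : ℕ => (((k ! : ℝ)⁻¹) • M ^ k) i := Pi.summable.mp h i
  rw [exp_eq_tsum ℝ]
  show (∑' (k : ℕ), ((k ! : ℝ)⁻¹) • M ^ k) i j = _
  erw [tsum_apply h, tsum_apply h1]
  simp [Matrix.smul_apply]

lemma exp_entry_summable (M : Matrix (Fin n) (Fin n) ℝ) (i j : Fin n) :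
    Summable fun k : ℕ => ((k ! : ℝ)⁻¹ * (M ^ k) i j) := by
  letI : NormedRing (Matrix (Fin n) (Fin n) ℝ) := Matrix.linftyOpNormedRing
  letI : NormedAlgebra ℝ (Matrix (Fin n) (Fin n) ℝ) := Matrix.linftyOpNormedAlgebra
  have h : Summable fun k : ℕ => ((k ! : ℝ)⁻¹) • M ^ k := expSeries_summable' (𝕂 := ℝ) M
  have h1 : Summable fun k : ℕ => (((k ! : ℝ)⁻¹) • M ^ k) i := Pi.summable.mp h i
  have h2 : Summable fun k : ℕ => ((((k ! : ℝ)⁻¹) • M ^ k) i) j := Pi.summable.mp h1 j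
  simpa [Matrix.smul_apply] using h2

lemma exp_nonneg_entries {M : Matrix (Fin n) (Fin n) ℝ}
    (hM : ∀ i j, 0 ≤ M i j) (i j : Fin n) : 0 ≤ exp M i j := by
  rw [exp_entry]
  exact tsum_nonneg fun k => mul_nonneg (by positivity) (pow_nonneg_entries hM k i j)

lemma one_le_exp_diag {M : Matrix (Fin n) (Fin n) ℝ}
    (hM : ∀ i j, 0 ≤ M i j) (j : Fin n) : 1 ≤ exp M j j := by
  rw [exp_entry]
  have := Summable.le_tsum (exp_entry_summable M j j) 0
    (fun k _ => mul_nonneg (by positivity) (pow_nonneg_entries hM k j j))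
  simpa [Matrix.one_apply] using this

lemma exp_smul_one (r : ℝ) :
    exp (r • (1 : Matrix (Fin n) (Fin n) ℝ)) = Real.exp r • (1 : Matrix (Fin n) (Fin n) ℝ) := by
  letI : NormedRing (Matrix (Fin n) (Fin n) ℝ) := Matrix.linftyOpNormedRing
  letI : NormedAlgebra ℝ (Matrix (Fin n) (Fin n) ℝ) := Matrix.linftyOpNormedAlgebra
  have := algebraMap_exp_comm (𝔸 := Matrix (Fin n) (Fin n) ℝ) r
  rw [← Real.exp_eq_exp_ℝ] at this
  rw [← Algebra.algebraMap_eq_smul_one, ← Algebra.algebraMap_eq_smul_one]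
  exact this.symm

lemma exp_split (T c : ℝ) (A : Matrix (Fin n) (Fin n) ℝ) :
    exp (T • A)
      = Real.exp (-(T*c)) • exp (T • (A + c • (1 : Matrix (Fin n) (Fin n) ℝ))) := by
  have key : T • A = T • (A + c • (1 : Matrix (Fin n) (Fin n) ℝ))
      + (-(T*c)) • (1 : Matrix (Fin n) (Fin n) ℝ) := by
    rw [smul_add]
    module
  rw [key, Matrix.exp_add_of_commute _ _ (by
      simpa using
        (Commute.one_right (T • (A + c • (1 : Matrix (Fin n) (Fin n) ℝ)))).smul_right (-(T*c))),
    exp_smul_one]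
  ext i j
  simp [Matrix.mul_apply, Matrix.one_apply, mul_comm]

lemma vecMul_pow_le {l : Fin n → ℝ} {B : Matrix (Fin n) (Fin n) ℝ}
    (hB : ∀ i j, 0 ≤ B i j) {c : ℝ} (hc : 0 ≤ c)
    (hlB : ∀ j, Matrix.vecMul l B j ≤ c * l j) (k : ℕ) (j : Fin n) :
    Matrix.vecMul l (B ^ k) j ≤ c ^ k * l j := by
  induction k generalizing j with
  | zero => simp [Matrix.vecMul_one]
  | succ k ih =>
      rw [pow_succ, ← Matrix.vecMul_vecMul]
      calc Matrix.vecMul (Matrix.vecMul l (B ^ k)) B j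
          ≤ Matrix.vecMul (fun i => c ^ k * l i) B j := by
            simp only [Matrix.vecMul, dotProduct]
            exact Finset.sum_le_sum fun i _ => mul_le_mul_of_nonneg_right (ih i) (hB i j)
        _ = c ^ k * Matrix.vecMul l B j := by
            simp [Matrix.vecMul, dotProduct, Finset.mul_sum, mul_assoc]
        _ ≤ c ^ k * (c * l j) := mul_le_mul_of_nonneg_left (hlB j) (by positivity)
        _ = c ^ (k+1) * l j := by ring

lemma vecMul_exp_le {l : Fin n → ℝ} {B : Matrix (Fin n) (Fin n) ℝ}
    (hB : ∀ i j, 0 ≤ B i j) {c : ℝ} (hc : 0 ≤ c)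
    (hlB : ∀ j, Matrix.vecMul l B j ≤ c * l j) (j : Fin n) :
    Matrix.vecMul l (exp B) j ≤ Real.exp c * l j := by
  have hsum1 : ∀ i, Summable (fun k : ℕ => l i * ((k ! : ℝ)⁻¹ * (B ^ k) i j)) :=
    fun i => (exp_entry_summable B i j).mul_left _
  have hL : Summable (fun k : ℕ => ∑ i, l i * ((k ! : ℝ)⁻¹ * (B ^ k) i j)) :=
    summable_sum fun i _ => hsum1 i
  have hR : Summable (fun k : ℕ => (k ! : ℝ)⁻¹ * c ^ k) := by
    have := expSeries_summable' (𝕂 := ℝ) (x := c)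
    simpa [smul_eq_mul] using this
  have hexpc : Real.exp c = ∑' (k : ℕ), ((k ! : ℝ)⁻¹ * c ^ k) := by
    rw [Real.exp_eq_exp_ℝ, exp_eq_tsum ℝ]
    simp [smul_eq_mul]
  calc Matrix.vecMul l (exp B) j
      = ∑ i, l i * exp B i j := by simp [Matrix.vecMul, dotProduct]
    _ = ∑ i, ∑' (k : ℕ), l i * ((k ! : ℝ)⁻¹ * (B ^ k) i j) := by
        refine Finset.sum_congr rfl fun i _ => ?_
        rw [exp_entry, tsum_mul_left]
    _ = ∑' (k : ℕ), ∑ i, l i * ((k ! : ℝ)⁻¹ * (B ^ k) i j) :=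
        (Summable.tsum_finsetSum fun i _ => hsum1 i).symm
    _ ≤ ∑' (k : ℕ), ((k ! : ℝ)⁻¹ * c ^ k) * l j := by
        refine Summable.tsum_le_tsum (fun k => ?_) hL (hR.mul_right (l j))
        have heq : ∑ i, l i * ((k ! : ℝ)⁻¹ * (B ^ k) i j)
            = (k ! : ℝ)⁻¹ * Matrix.vecMul l (B ^ k) j := by
          simp only [Matrix.vecMul, dotProduct, Finset.mul_sum]
          exact Finset.sum_congr rfl fun i _ => by ring
        rw [heq]
        calc (k ! : ℝ)⁻¹ * Matrix.vecMul l (B ^ k) j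
            ≤ (k ! : ℝ)⁻¹ * (c ^ k * l j) :=
              mul_le_mul_of_nonneg_left (vecMul_pow_le hB hc hlB k j) (by positivity)
          _ = ((k ! : ℝ)⁻¹ * c ^ k) * l j := by ring
    _ = Real.exp c * l j := by rw [tsum_mul_right, ← hexpc]

lemma exists_eigenvector {μ : ℂ} {Mc : Matrix (Fin n) (Fin n) ℂ}
    (h : μ ∈ spectrum ℂ Mc) : ∃ v : Fin n → ℂ, v ≠ 0 ∧ Mc.mulVec v = μ • v := by
  rw [← AlgEquiv.spectrum_eq (Matrix.toLinAlgEquiv' : Matrix (Fin n) (Fin n) ℂ ≃ₐ[ℂ] _)] at h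
  have h2 := Module.End.hasEigenvalue_iff_mem_spectrum.mpr h
  obtain ⟨v, hv⟩ := h2.exists_hasEigenvector
  refine ⟨v, hv.2, ?_⟩
  have := hv.apply_eq_smul
  simpa [Matrix.toLinAlgEquiv'_apply] using this

end ArbDwellAux

/-- Stability under arbitrary dwell-time implies Schur stability of `J exp(AT)` for
every `T > 0`. -/
theorem arbitrary_dwell_time_schur (n : ℕ) (A J : Matrix (Fin n) (Fin n) ℝ)
    (hA : ∀ i j, i ≠ j → 0 ≤ A i j) (hJ : ∀ i j, 0 ≤ J i j)
    (l : Fin n → ℝ) (hl : ∀ i, 0 < l i)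
    (hflow : ∀ j, Matrix.vecMul l A j < 0)
    (hjump : ∀ j, Matrix.vecMul l (J - 1) j < 0) :
    ∀ T : ℝ, 0 < T →
      ∀ μ ∈ spectrum ℂ ((J * exp (T • A)).map (algebraMap ℝ ℂ)),
        ‖μ‖ < 1 := by
  intro T hT μ hμ
  classical
  open ArbDwellAux in
  -- shift `A` to a nonnegative matrix `B`
  set c : ℝ := ∑ i, |A i i| with hc
  have hc0 : 0 ≤ c := Finset.sum_nonneg fun i _ => abs_nonneg _
  set B : Matrix (Fin n) (Fin n) ℝ := A + c • (1 : Matrix (Fin n) (Fin n) ℝ) with hBdef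
  have hB : ∀ i j, 0 ≤ B i j := by
    intro i j
    by_cases h : i = j
    · subst h
      have h1 : |A i i| ≤ c :=
        Finset.single_le_sum (f := fun i => |A i i|) (fun i _ => abs_nonneg _)
          (Finset.mem_univ i)
      have h2 := neg_abs_le (A i i)
      simp only [hBdef, Matrix.add_apply, Matrix.smul_apply, Matrix.one_apply_eq, smul_eq_mul,
        mul_one]
      linarith
    · simpa [hBdef, Matrix.add_apply, Matrix.smul_apply, Matrix.one_apply, h] using hA i j h
  have hTB : ∀ i j, 0 ≤ (T • B) i j := fun i j => by
    simpa [Matrix.smul_apply] using mul_nonneg hT.le (hB i j)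
  set E : Matrix (Fin n) (Fin n) ℝ := exp (T • A) with hEdef
  have hsplit : E = Real.exp (-(T*c)) • exp (T • B) := exp_split T c A
  have hE0 : ∀ i j, 0 ≤ E i j := by
    intro i j
    rw [hsplit]
    simpa [Matrix.smul_apply] using
      mul_nonneg (Real.exp_pos _).le (exp_nonneg_entries hTB i j)
  have hEdiag : ∀ j, 0 < E j j := by
    intro j
    rw [hsplit]
    have h1 : (1 : ℝ) ≤ exp (T • B) j j := one_le_exp_diag hTB j
    have h2 : (0 : ℝ) < Real.exp (-(T*c)) := Real.exp_pos _
    simp only [Matrix.smul_apply, smul_eq_mul]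
    nlinarith
  -- `lᵀ E ≤ lᵀ`
  have hlTB : ∀ j, Matrix.vecMul l (T • B) j ≤ (T * c) * l j := by
    intro j
    have h1 : Matrix.vecMul l B j = Matrix.vecMul l A j + c * l j := by
      simp [hBdef, Matrix.vecMul, dotProduct, Matrix.add_apply, Matrix.smul_apply,
        Matrix.one_apply, mul_add, Finset.sum_add_distrib, Finset.mul_sum, mul_comm,
        Finset.sum_ite_eq', mul_assoc]
    have h2 : Matrix.vecMul l (T • B) j = T * Matrix.vecMul l B j := by
      simp [Matrix.vecMul, dotProduct, Matrix.smul_apply, Finset.mul_sum]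
      exact Finset.sum_congr rfl fun i _ => by ring
    rw [h2, h1]
    have := hflow j
    nlinarith
  have hlE : ∀ j, Matrix.vecMul l E j ≤ l j := by
    intro j
    have h1 : Matrix.vecMul l E j
        = Real.exp (-(T*c)) * Matrix.vecMul l (exp (T • B)) j := by
      rw [hsplit]
      simp [Matrix.vecMul, dotProduct, Matrix.smul_apply, Finset.mul_sum]
      exact Finset.sum_congr rfl fun i _ => by ring
    have h2 := vecMul_exp_le hTB (mul_nonneg hT.le hc0) hlTB j
    have h3 : (0 : ℝ) < Real.exp (-(T*c)) := Real.exp_pos _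
    have h4 : Real.exp (-(T*c)) * Real.exp (T*c) = 1 := by
      rw [← Real.exp_add]; simp
    calc Matrix.vecMul l E j
        = Real.exp (-(T*c)) * Matrix.vecMul l (exp (T • B)) j := h1
      _ ≤ Real.exp (-(T*c)) * (Real.exp (T*c) * l j) := by
          exact mul_le_mul_of_nonneg_left h2 h3.le
      _ = l j := by rw [← mul_assoc, h4, one_mul]
  -- `lᵀ (J E) < lᵀ` strictly
  have hlJ : ∀ i, Matrix.vecMul l J i < l i := by
    intro i
    have := hjump i
    have h1 : Matrix.vecMul l (J - 1) i = Matrix.vecMul l J i - l i := by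
      simp only [Matrix.vecMul, dotProduct, Matrix.sub_apply, mul_sub,
        Finset.sum_sub_distrib]
      congr 1
      simp [Matrix.one_apply, mul_ite, mul_one, mul_zero, Finset.sum_ite_eq']
    linarith [h1 ▸ this]
  set M : Matrix (Fin n) (Fin n) ℝ := J * E with hMdef
  have hM0 : ∀ i j, 0 ≤ M i j := mul_nonneg_entries hJ hE0
  have hlM : ∀ j, Matrix.vecMul l M j < l j := by
    intro j
    have h1 : Matrix.vecMul l M j = Matrix.vecMul (Matrix.vecMul l J) E j := by
      rw [hMdef, Matrix.vecMul_vecMul]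
    have h2 : Matrix.vecMul (Matrix.vecMul l J) E j < Matrix.vecMul l E j := by
      simp only [Matrix.vecMul, dotProduct]
      refine Finset.sum_lt_sum (fun i _ => mul_le_mul_of_nonneg_right (hlJ i).le (hE0 i j)) ?_
      exact ⟨j, Finset.mem_univ j, mul_lt_mul_of_pos_right (hlJ j) (hEdiag j)⟩
    calc Matrix.vecMul l M j = Matrix.vecMul (Matrix.vecMul l J) E j := h1
      _ < Matrix.vecMul l E j := h2
      _ ≤ l j := hlE j
  -- eigenvector argument
  obtain ⟨v, hv0, hv⟩ := exists_eigenvector hμ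
  set a : Fin n → ℝ := fun i => ‖v i‖ with ha
  have ha0 : ∀ i, 0 ≤ a i := fun i => norm_nonneg _
  have key : ∀ i, ‖μ‖ * a i ≤ ∑ j, M i j * a j := by
    intro i
    have h1 : ((J * exp (T • A)).map (algebraMap ℝ ℂ)).mulVec v i = μ * v i := by
      rw [hv]; simp
    have h2 : ((J * exp (T • A)).map (algebraMap ℝ ℂ)).mulVec v i
        = ∑ j, (M i j : ℂ) * v j := by
      simp [Matrix.mulVec, dotProduct, Matrix.map_apply, hMdef, hEdef]
    have h3 : ‖μ‖ * a i = ‖∑ j, (M i j : ℂ) * v j‖ := by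
      rw [← h2, h1, norm_mul]
    rw [h3]
    calc ‖∑ j, (M i j : ℂ) * v j‖
        ≤ ∑ j, ‖(M i j : ℂ) * v j‖ := norm_sum_le _ _
      _ = ∑ j, M i j * a j := by
          refine Finset.sum_congr rfl fun j _ => ?_
          rw [norm_mul, Complex.norm_real, Real.norm_of_nonneg (hM0 i j)]
  obtain ⟨i0, hi0⟩ := Function.ne_iff.mp hv0
  set S : ℝ := ∑ j, l j * a j with hS
  have hai0 : 0 < a i0 := by
    simpa [ha] using norm_pos_iff.mpr hi0
  have hSpos : 0 < S := by
    refine Finset.sum_pos' (fun j _ => mul_nonneg (hl j).le (ha0 j)) ?_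
    exact ⟨i0, Finset.mem_univ i0, mul_pos (hl i0) hai0⟩
  have hmain : ‖μ‖ * S < S := by
    calc ‖μ‖ * S = ∑ i, l i * (‖μ‖ * a i) := by
          rw [hS, Finset.mul_sum]
          exact Finset.sum_congr rfl fun i _ => by ring
      _ ≤ ∑ i, l i * (∑ j, M i j * a j) :=
          Finset.sum_le_sum fun i _ => mul_le_mul_of_nonneg_left (key i) (hl i).le
      _ = ∑ j, Matrix.vecMul l M j * a j := by
          simp only [Finset.mul_sum]
          rw [Finset.sum_comm]
          refine Finset.sum_congr rfl fun j _ => ?_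
          simp only [Matrix.vecMul, dotProduct, Finset.sum_mul]
          exact Finset.sum_congr rfl fun i _ => by ring
      _ < ∑ j, l j * a j := by
          refine Finset.sum_lt_sum
            (fun j _ => mul_le_mul_of_nonneg_right (hlM j).le (ha0 j)) ?_
          exact ⟨i0, Finset.mem_univ i0, mul_lt_mul_of_pos_right (hlM i0) hai0⟩
      _ = S := hS.symm
  by_contra hcon
  push_neg at hcon
  have : S ≤ ‖μ‖ * S := le_mul_of_one_le_left hSpos.le hcon
  linarith
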